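/- Let q be a prime power and let g(X) ∈ 𝔽_q[X] be a polynomial of degree at most d. Then for all integers j, ℓ with j ≥ ℓ ≥ 0, there exists a polynomial H(X) ∈ 𝔽_q[X], which is either zero or of degree at most d·ℓ − ℓ, such that the ℓ-th Hasse derivative of g(X)^j equals H(X)·g(X)^{j−ℓ}. -/

import Mathlib

open Polynomial

private lemma key_stmt1 {F : Type*} [Field F] (d : ℕ) (g : F[X]) (hg : g.natDegree ≤ d) :
    ∀ j ℓ : ℕ, ∃ H : F[X], H.natDegree ≤ d * ℓ - ℓ ∧
      hasseDeriv ℓ (g ^ j) = H * g ^ (j - ℓ) := by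
  intro j
  induction j with
  | zero =>
    intro ℓ
    refine ⟨hasseDeriv ℓ (g ^ 0), ?_, by simp⟩
    calc (hasseDeriv ℓ (g ^ 0)).natDegree ≤ (g ^ 0).natDegree - ℓ :=
          natDegree_hasseDeriv_le _ _
      _ ≤ d * ℓ - ℓ := by simp
  | succ j IH =>
    intro ℓ
    by_cases hcase : ℓ ≤ j
    · -- inductive case
      choose Hf hHdeg hHeq using IH
      refine ⟨∑ ij ∈ Finset.HasAntidiagonal.antidiagonal ℓ,
          (if ij.1 = 0 then Hf ℓ else hasseDeriv ij.1 g * Hf ij.2 * g ^ (ij.1 - 1)), ?_, ?_⟩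
      · apply natDegree_sum_le_of_forall_le
        intro ij hij
        rw [Finset.HasAntidiagonal.mem_antidiagonal] at hij
        by_cases h1 : ij.1 = 0
        · simpa [h1, ← hij] using hHdeg ij.2
        · rw [if_neg h1]
          by_cases h2 : d < ij.1
          · rw [hasseDeriv_eq_zero_of_lt_natDegree g ij.1 (lt_of_le_of_lt hg h2)]
            simp
          · push_neg at h2
            have b1 : (hasseDeriv ij.1 g).natDegree ≤ d - ij.1 :=
              le_trans (natDegree_hasseDeriv_le _ _) (Nat.sub_le_sub_right hg _)
            have b2 : (Hf ij.2).natDegree ≤ d * ij.2 - ij.2 := hHdeg ij.2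
            have b3 : (g ^ (ij.1 - 1)).natDegree ≤ (ij.1 - 1) * d :=
              le_trans (natDegree_pow_le) (Nat.mul_le_mul_left _ hg)
            refine le_trans (natDegree_mul_le) (le_trans
              (add_le_add (le_trans natDegree_mul_le (add_le_add b1 b2)) b3) ?_)
            have hd1 : 1 ≤ d := le_trans (Nat.one_le_iff_ne_zero.mpr h1) h2
            have e1 : d * ℓ = d * ij.1 + d * ij.2 := by rw [← hij]; ring
            have e2 : ij.2 ≤ d * ij.2 := Nat.le_mul_of_pos_left _ hd1
            have e3 : (ij.1 - 1) * d + d = ij.1 * d := by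
              have : 1 ≤ ij.1 := Nat.one_le_iff_ne_zero.mpr h1
              rw [← Nat.succ_pred_eq_of_pos this, Nat.succ_mul]
              simp
            have e4 : ij.1 * d = d * ij.1 := Nat.mul_comm _ _
            omega
      · rw [pow_succ', hasseDeriv_mul, Finset.sum_mul]
        refine Finset.sum_congr rfl fun ij hij => ?_
        rw [Finset.HasAntidiagonal.mem_antidiagonal] at hij
        by_cases h1 : ij.1 = 0
        · have h2 : ij.2 = ℓ := by omega
          rw [h1, h2, if_pos rfl, hasseDeriv_zero', hHeq ℓ]
          have : j + 1 - ℓ = (j - ℓ) + 1 := by omega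
          rw [this, pow_succ]
          ring
        · rw [if_neg h1, hHeq ij.2]
          have : j - ij.2 = (ij.1 - 1) + (j + 1 - ℓ) := by omega
          rw [this, pow_add]
          ring
    · -- direct case: ℓ ≥ j + 1
      push_neg at hcase
      refine ⟨hasseDeriv ℓ (g ^ (j + 1)), ?_, ?_⟩
      · calc (hasseDeriv ℓ (g ^ (j + 1))).natDegree ≤ (g ^ (j + 1)).natDegree - ℓ :=
            natDegree_hasseDeriv_le _ _
          _ ≤ (j + 1) * d - ℓ :=
            Nat.sub_le_sub_right (le_trans natDegree_pow_le (Nat.mul_le_mul_left _ hg)) _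
          _ ≤ d * ℓ - ℓ := by
            refine Nat.sub_le_sub_right ?_ _
            calc (j + 1) * d ≤ ℓ * d := Nat.mul_le_mul_right _ hcase
              _ = d * ℓ := Nat.mul_comm _ _
      · rw [Nat.sub_eq_zero_of_le hcase, pow_zero, mul_one]

theorem stmt1 {F : Type*} [Field F] [Fintype F] (d : ℕ) (g : F[X]) (hg : g.degree ≤ (d : ℕ))
    (j ℓ : ℕ) (hℓj : ℓ ≤ j) :
    ∃ H : F[X], H.degree ≤ ((d * ℓ - ℓ : ℕ) : WithBot ℕ) ∧
      hasseDeriv ℓ (g ^ j) = H * g ^ (j - ℓ) := by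
  obtain ⟨H, hdeg, heq⟩ := key_stmt1 d g (natDegree_le_iff_degree_le.mpr hg) j ℓ
  exact ⟨H, natDegree_le_iff_degree_le.mp hdeg, heq⟩
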